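/- arXiv:2505.06374 — 3 statements merged into one kernel-verified Lean document; each statement's English description precedes it below -/
import Mathlib

section
/- Suppose $\gamma_1, \gamma_2 > 0$ with $\gamma_2 > 3\gamma_1$, and suppose $u > 0$ satisfies $\gamma_1 u \le \gamma_2 \log(u)$. Then $u \le \frac{\gamma_2}{\gamma_1}\left[\log\left(\frac{\gamma_2}{\gamma_1}\right) + \sqrt{2\left(\log\left(\frac{\gamma_2}{\gamma_1}\right) - 1\right)}\right]$. -/
theorem stmt_1 (γ₁ γ₂ u : ℝ) (hγ₁ : 0 < γ₁) (hγ₂ : γ₂ > 3 * γ₁)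
    (hu : 0 < u) (h : γ₁ * u ≤ γ₂ * Real.log u) :
    u ≤ (γ₂ / γ₁) * (Real.log (γ₂ / γ₁) + Real.sqrt (2 * (Real.log (γ₂ / γ₁) - 1))) := by
  set r : ℝ := γ₂ / γ₁ with hr
  set L : ℝ := Real.log r with hL
  set s : ℝ := Real.sqrt (2 * (L - 1)) with hs
  have hr3 : 3 < r := (lt_div_iff₀ hγ₁).mpr (by linarith)
  have hrpos : 0 < r := by linarith
  have hL1 : 1 < L := by
    rw [hL]
    apply (Real.lt_log_iff_exp_lt hrpos).mpr
    have := Real.exp_one_lt_d9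
    linarith
  have hsnn : 0 ≤ s := Real.sqrt_nonneg _
  have hssq : s ^ 2 = 2 * (L - 1) := Real.sq_sqrt (by linarith)
  -- key: L + s ≤ exp s
  have hexp : L + s ≤ Real.exp s := by
    have h3 := Real.sum_le_exp_of_nonneg hsnn 3
    simp [Finset.sum_range_succ, Nat.factorial] at h3
    nlinarith [h3]
  have hLs : 0 < L + s := by linarith
  have hlogLs : Real.log (L + s) ≤ s := (Real.log_le_iff_le_exp hLs).mpr hexp
  set B : ℝ := r * (L + s) with hB
  have hBr : r < B := by nlinarith
  have hBpos : 0 < B := by linarith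
  have hlogB : Real.log B = L + Real.log (L + s) := by
    rw [hB, Real.log_mul (ne_of_gt hrpos) (ne_of_gt hLs)]
  have hBge : r * Real.log B ≤ B := by
    rw [hlogB, hB]
    nlinarith
  have hur : u ≤ r * Real.log u := by
    rw [hr]
    rw [div_mul_eq_mul_div, le_div_iff₀ hγ₁]
    nlinarith
  by_contra hc
  push_neg at hc
  have hc' : B < u := by
    have : B = r * (L + s) := hB
    calc B = r * (L + s) := hB
    _ < u := by
      rw [hr, hL, hs] at *
      linarith [hc]
  have hlogu : Real.log u ≤ Real.log B + (u - B) / B := by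
    have := Real.log_le_sub_one_of_pos (show 0 < u / B from div_pos hu hBpos)
    rw [Real.log_div (ne_of_gt hu) (ne_of_gt hBpos)] at this
    have : Real.log u - Real.log B ≤ u / B - 1 := this
    have hd : u / B - 1 = (u - B) / B := by field_simp
    linarith [hd ▸ this]
  have : u ≤ B + r * ((u - B) / B) := by
    calc u ≤ r * Real.log u := hur
    _ ≤ r * (Real.log B + (u - B) / B) := by
        apply mul_le_mul_of_nonneg_left hlogu (le_of_lt hrpos)
    _ = r * Real.log B + r * ((u - B) / B) := by ring
    _ ≤ B + r * ((u - B) / B) := by linarith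
  have hlt : r * ((u - B) / B) < u - B := by
    rw [mul_div_assoc']
    rw [div_lt_iff₀ hBpos]
    nlinarith
  linarith
end

section
/- Define, for $k \ge 1$: $x_k = \frac{1}{k+1}$, $p_k = \frac{1}{k+1} + \frac{1}{(k+1)^2}$ (note $p_k \in (0,1)$ for $k \ge 1$), and let $g_k$ be a random variable taking value $1$ with probability $p_k$ and $0$ with probability $1 - p_k$. Let $P(y) = \max(0, y)$ denote projection onto $[0, \infty)$. Define $\Xi_k = |P(x_k - p_k) - x_k|$ and $D_k = \mathbb{E}[\,|P(x_k - g_k) - x_k|\,]$. Then $\Xi_k = \frac{1}{k+1}$, $D_k = \frac{1}{(k+1)^2} + \frac{1}{(k+1)^3}$, and consequently $\lim_{k \to \infty} D_k / \Xi_k = 0$. -/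
open Filter

/-- the counterexample. `g_k` takes value `1` with probability `p k`
and `0` with probability `1 - p k`; `D k` is the resulting expectation of
`|P(x_k - g_k) - x_k|` with `P` the projection onto `[0,∞)`. -/
theorem stmt_12 (x p Ξ D : ℕ → ℝ)
    (hx : ∀ k, x k = 1 / ((k : ℝ) + 1))
    (hp : ∀ k, p k = 1 / ((k : ℝ) + 1) + 1 / ((k : ℝ) + 1) ^ 2)
    (hΞ : ∀ k, Ξ k = |max 0 (x k - p k) - x k|)
    (hD : ∀ k, D k = p k * |max 0 (x k - 1) - x k| + (1 - p k) * |max 0 (x k - 0) - x k|) :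
    (∀ k ≥ 1, p k ∈ Set.Ioo (0 : ℝ) 1) ∧
    (∀ k ≥ 1, Ξ k = 1 / ((k : ℝ) + 1)) ∧
    (∀ k ≥ 1, D k = 1 / ((k : ℝ) + 1) ^ 2 + 1 / ((k : ℝ) + 1) ^ 3) ∧
    Tendsto (fun k => D k / Ξ k) atTop (nhds 0) := by
  have hpos : ∀ k : ℕ, (0 : ℝ) < (k : ℝ) + 1 := by
    intro k; positivity
  have hΞ' : ∀ k : ℕ, Ξ k = 1 / ((k : ℝ) + 1) := by
    intro k
    have h1 : x k - p k = -(1 / ((k : ℝ) + 1) ^ 2) := by rw [hx, hp]; ring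
    have h2 : max 0 (x k - p k) = 0 := by
      rw [h1, max_eq_left]
      have : (0:ℝ) < 1 / ((k : ℝ) + 1) ^ 2 := by positivity
      linarith
    rw [hΞ, h2, hx]
    have h3 : (0:ℝ) < 1 / ((k : ℝ) + 1) := by positivity
    rw [abs_of_nonpos (by linarith)]
    ring
  have hD' : ∀ k : ℕ, D k = p k * x k := by
    intro k
    have h1 : max 0 (x k - 1) = 0 := by
      rw [max_eq_left]
      rw [hx]
      have h2 : (1:ℝ) ≤ (k : ℝ) + 1 := by
        have := Nat.cast_nonneg (α := ℝ) k; linarith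
      have := (div_le_one (hpos k)).2 h2
      linarith
    have hxpos : 0 < x k := by rw [hx]; positivity
    rw [hD, h1, sub_zero, max_eq_right hxpos.le]
    rw [abs_of_nonpos (by linarith), sub_self, abs_zero]
    ring
  refine ⟨?_, fun k _ => hΞ' k, ?_, ?_⟩
  · intro k hk
    have hk2 : (2 : ℝ) ≤ (k : ℝ) + 1 := by
      have : (1:ℝ) ≤ (k:ℝ) := by exact_mod_cast hk
      linarith
    constructor
    · rw [hp]; positivity
    · rw [hp]
      have h1 : 1 / ((k : ℝ) + 1) ≤ 1 / 2 := by
        apply div_le_div_of_nonneg_left (by norm_num) (by norm_num) hk2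
      have h2 : 1 / ((k : ℝ) + 1) ^ 2 ≤ 1 / 4 := by
        apply div_le_div_of_nonneg_left (by norm_num) (by norm_num)
        nlinarith
      linarith
  · intro k _
    rw [hD', hp, hx]
    field_simp
  · have heq : ∀ k : ℕ, D k / Ξ k = p k := by
      intro k
      rw [hD', hΞ', hx]
      field_simp
    simp only [heq]
    have h1 : Tendsto (fun k : ℕ => 1 / ((k : ℝ) + 1)) atTop (nhds 0) :=
      tendsto_one_div_add_atTop_nhds_zero_nat
    have h2 : Tendsto (fun k : ℕ => 1 / ((k : ℝ) + 1) ^ 2) atTop (nhds 0) := by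
      have := h1.mul h1
      simpa [div_mul_div_comm, sq] using this
    have := h1.add h2
    simp only [add_zero] at this
    refine Tendsto.congr (fun k => (hp k).symm) this
end

section
/- Let $\mathcal{F} = \prod_{i=1}^n [l_i, u_i]$ be a box, $x \in \mathcal{F}$, $g \in \mathbb{R}^n$, $d = P_{\mathcal{F}}(x - g) - x$, and for each $i$ let $\Delta_i \ge 0$ with $\Delta_i \le |d_i|$. Define $\mathcal{B} = \{ y \in \mathbb{R}^n : |y_i - x_i| \le \Delta_i \text{ for all } i \}$ and $s^L = P_{\mathcal{F} \cap \mathcal{B}}(x - g) - x$. Then for each $i$, $s^L_i$ has the same sign as $d_i$ (or is zero), and $|s^L_i| = \min(|d_i|, \Delta_i)$; in particular $g_i s^L_i \le 0$ for all $i$. -/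
/-- characterization of the truncated projected-gradient step:
each component of `sL` is the component of `d` clipped to magnitude `Δ i`. -/
theorem stmt_19 (n : ℕ) (l u x g Δ d sL : Fin n → ℝ)
    (hx : ∀ i, x i ∈ Set.Icc (l i) (u i))
    (hd : ∀ i, d i = max (l i) (min (x i - g i) (u i)) - x i)
    (hΔ : ∀ i, 0 ≤ Δ i) (hΔd : ∀ i, Δ i ≤ |d i|)
    (hsL : ∀ i, sL i =
      max (l i) (max (x i - Δ i) (min (x i - g i) (min (x i + Δ i) (u i)))) - x i) :
    ∀ i, 0 ≤ sL i * d i ∧ |sL i| = min (|d i|) (Δ i) ∧ g i * sL i ≤ 0 := by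
  intro i
  obtain ⟨hxl, hxu⟩ := hx i
  have hdi := hd i
  have hΔi := hΔ i
  have hΔdi := hΔd i
  have hsLi := hsL i
  rcases le_total 0 (g i) with hg | hg
  · -- g i ≥ 0, so d i ≤ 0
    have h1 : min (x i - g i) (u i) = x i - g i := min_eq_left (by linarith)
    rw [h1] at hdi
    have hd0 : d i ≤ 0 := by
      rw [hdi]
      have := max_le (show l i ≤ x i from hxl) (show x i - g i ≤ x i by linarith)
      linarith
    rw [abs_of_nonpos hd0] at hΔdi
    have hmax1 : x i - g i ≤ max (l i) (x i - g i) := le_max_right _ _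
    have hmax2 : l i ≤ max (l i) (x i - g i) := le_max_left _ _
    have hDG : Δ i ≤ g i := by rw [hdi] at hΔdi; linarith
    have hDa : l i ≤ x i - Δ i := by rw [hdi] at hΔdi; linarith
    have h2 : min (x i - g i) (min (x i + Δ i) (u i)) = x i - g i :=
      min_eq_left (le_min (by linarith) (by linarith))
    rw [h2] at hsLi
    have h3 : max (x i - Δ i) (x i - g i) = x i - Δ i := max_eq_left (by linarith)
    rw [h3] at hsLi
    have h4 : max (l i) (x i - Δ i) = x i - Δ i := max_eq_right hDa
    rw [h4] at hsLi
    have hsLv : sL i = -Δ i := by rw [hsLi]; ring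
    refine ⟨by nlinarith, ?_, by nlinarith⟩
    rw [hsLv, abs_neg, abs_of_nonneg hΔi, abs_of_nonpos hd0,
      min_eq_right hΔdi]
  · -- g i ≤ 0, so d i ≥ 0
    have h1 : l i ≤ min (x i - g i) (u i) := le_min (by linarith) (by linarith)
    have h1' : max (l i) (min (x i - g i) (u i)) = min (x i - g i) (u i) := max_eq_right h1
    rw [h1'] at hdi
    have hd0 : 0 ≤ d i := by
      rw [hdi]
      have := le_min (show x i ≤ x i - g i by linarith) hxu
      linarith
    rw [abs_of_nonneg hd0] at hΔdi
    have hmin1 : min (x i - g i) (u i) ≤ x i - g i := min_le_left _ _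
    have hmin2 : min (x i - g i) (u i) ≤ u i := min_le_right _ _
    have hDG : Δ i ≤ -g i := by rw [hdi] at hΔdi; linarith
    have hDb : x i + Δ i ≤ u i := by rw [hdi] at hΔdi; linarith
    have h2 : min (x i + Δ i) (u i) = x i + Δ i := min_eq_left hDb
    rw [h2] at hsLi
    have h3 : min (x i - g i) (x i + Δ i) = x i + Δ i := min_eq_right (by linarith)
    rw [h3] at hsLi
    have h4 : max (x i - Δ i) (x i + Δ i) = x i + Δ i := max_eq_right (by linarith)
    rw [h4] at hsLi
    have h5 : max (l i) (x i + Δ i) = x i + Δ i := max_eq_right (by linarith)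
    rw [h5] at hsLi
    have hsLv : sL i = Δ i := by rw [hsLi]; ring
    refine ⟨by nlinarith, ?_, by nlinarith⟩
    rw [hsLv, abs_of_nonneg hΔi, abs_of_nonneg hd0, min_eq_right hΔdi]
end
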